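/- Let H be a real symmetric positive definite n×n matrix and B a real skew-symmetric n×n matrix such that the Hermitian matrix H + iB is positive definite. Then the real symmetric matrix H + B H⁻¹ B is positive definite, and the inverse of H + iB is given by (H + iB)⁻¹ = X − i H⁻¹ B X, where X = (H + B H⁻¹ B)⁻¹. In particular the real part of (H + iB)⁻¹ equals (H + B H⁻¹ B)⁻¹. -/

import Mathlib

open Matrix ComplexOrder

/-- Complexification of a real matrix commutes with mulVec. -/
private lemma mulVec_ofReal {n : ℕ} (A : Matrix (Fin n) (Fin n) ℝ) (v : Fin n → ℝ) :
    (A.map (fun x => (x : ℂ))) *ᵥ (fun i => ((v i : ℝ) : ℂ)) =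
      fun i => ((A *ᵥ v) i : ℂ) := by
  ext i
  simp only [Matrix.mulVec, dotProduct, Matrix.map_apply]
  push_cast
  rfl

/-- If `H` is real symmetric positive definite, `B` real skew-symmetric, and the Hermitian
matrix `H + iB` is positive definite, then `H + B H⁻¹ B` is positive definite and
`(H + iB)⁻¹ = X - i H⁻¹ B X` with `X = (H + B H⁻¹ B)⁻¹`; in particular the real part of
`(H + iB)⁻¹` equals `(H + B H⁻¹ B)⁻¹`. -/
theorem stmt_6 {n : ℕ} (H B : Matrix (Fin n) (Fin n) ℝ)
    (hH : H.IsSymm) (hHpd : H.PosDef) (hB : Bᵀ = -B)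
    (hpd : (H.map (fun x => (x : ℂ)) + Complex.I • B.map (fun x => (x : ℂ))).PosDef) :
    (H + B * H⁻¹ * B).PosDef ∧
    (H.map (fun x => (x : ℂ)) + Complex.I • B.map (fun x => (x : ℂ)))⁻¹ =
      ((H + B * H⁻¹ * B)⁻¹).map (fun x => (x : ℂ)) -
        Complex.I • ((H⁻¹ * B * (H + B * H⁻¹ * B)⁻¹).map (fun x => (x : ℂ))) ∧
    ∀ i j, (((H.map (fun x => (x : ℂ)) + Complex.I • B.map (fun x => (x : ℂ)))⁻¹) i j).re =
      (H + B * H⁻¹ * B)⁻¹ i j := by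
  have hf : (fun x : ℝ => (x : ℂ)) = ⇑(Complex.ofRealHom) := rfl
  set f : ℝ →+* ℂ := Complex.ofRealHom with hfdef
  set S : Matrix (Fin n) (Fin n) ℝ := H + B * H⁻¹ * B with hS
  set M : Matrix (Fin n) (Fin n) ℂ :=
    H.map (fun x => (x : ℂ)) + Complex.I • B.map (fun x => (x : ℂ)) with hM
  have hHdet : IsUnit H.det := hHpd.det_pos.ne'.isUnit
  have hHinv : H * H⁻¹ = 1 := Matrix.mul_nonsing_inv _ hHdet
  have hHN : H * (H⁻¹ * B) = B := by rw [← mul_assoc, hHinv, one_mul]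
  have hmapmul : ∀ A C : Matrix (Fin n) (Fin n) ℝ,
      (A * C).map (fun x => (x : ℂ)) =
        A.map (fun x => (x : ℂ)) * C.map (fun x => (x : ℂ)) := by
    intro A C; rw [hf]; exact Matrix.map_mul
  -- key algebraic identity: M * (1 - I • (H⁻¹B)) = S (complexified)
  have key : M * (1 - Complex.I • (H⁻¹ * B).map (fun x => (x : ℂ))) =
      S.map (fun x => (x : ℂ)) := by
    have h1 : H.map (fun x => (x : ℂ)) * (H⁻¹ * B).map (fun x => (x : ℂ)) =
        B.map (fun x => (x : ℂ)) := by rw [← hmapmul, hHN]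
    have h2 : B.map (fun x => (x : ℂ)) * (H⁻¹ * B).map (fun x => (x : ℂ)) =
        (B * H⁻¹ * B).map (fun x => (x : ℂ)) := by rw [← hmapmul, mul_assoc]
    have hmapadd : (H + B * H⁻¹ * B).map (fun x => (x : ℂ)) =
        H.map (fun x => (x : ℂ)) + (B * H⁻¹ * B).map (fun x => (x : ℂ)) := by
      ext i j; simp
    rw [hS, hM, hmapadd]
    rw [mul_sub, mul_one, Matrix.mul_smul, add_mul, Matrix.smul_mul, h1, h2, smul_add,
      smul_smul, Complex.I_mul_I, neg_one_smul]
    module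
  -- positivity of S
  have hSsymmT : Sᵀ = S := by
    rw [hS, transpose_add, transpose_mul, transpose_mul, hB, Matrix.transpose_nonsing_inv,
      hH.eq]
    simp [mul_assoc]
  have hSherm : S.IsHermitian := by
    rw [Matrix.IsHermitian, Matrix.conjTranspose_eq_transpose_of_trivial, hSsymmT]
  have hposS : ∀ x : Fin n → ℝ, x ≠ 0 → 0 < dotProduct (star x) (S *ᵥ x) := by
    intro x hx
    set w : Fin n → ℝ := (H⁻¹ * B) *ᵥ x with hw
    set z : Fin n → ℂ := fun i => (x i : ℂ) - Complex.I * (w i : ℂ) with hz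
    have hzdef : z = (1 - Complex.I • (H⁻¹ * B).map (fun x => (x : ℂ))) *ᵥ
        (fun i => ((x i : ℝ) : ℂ)) := by
      ext i
      rw [Matrix.sub_mulVec, Matrix.smul_mulVec, mulVec_ofReal]
      simp [hz, hw]
    have hzne : z ≠ 0 := by
      intro h0
      apply hx
      ext i
      have := congrArg Complex.re (congrFun h0 i)
      simpa [hz] using this
    have hMz : M *ᵥ z = fun i => ((S *ᵥ x) i : ℂ) := by
      rw [hzdef, Matrix.mulVec_mulVec, key, mulVec_ofReal]
    have hdot : dotProduct (star z) (M *ᵥ z) =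
        ((dotProduct x (S *ᵥ x) : ℝ) : ℂ) +
          Complex.I * ((dotProduct w (S *ᵥ x) : ℝ) : ℂ) := by
      rw [hMz]
      simp only [dotProduct, Pi.star_apply, hz, star_sub, star_mul',
        Complex.star_def, Complex.conj_ofReal, Complex.conj_I]
      push_cast
      rw [Finset.mul_sum, ← Finset.sum_add_distrib]
      exact Finset.sum_congr rfl fun i _ => by ring
    have hlt := hpd.dotProduct_mulVec_pos hzne
    rw [hdot, Complex.lt_def] at hlt
    have hre := hlt.1
    simpa [star_trivial] using hre
  have hSpd : S.PosDef := Matrix.PosDef.of_dotProduct_mulVec_pos hSherm (fun x hx => hposS x hx)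
  have hSdet : IsUnit S.det := hSpd.det_pos.ne'.isUnit
  have hSinv : S * S⁻¹ = 1 := Matrix.mul_nonsing_inv _ hSdet
  -- the inverse formula
  have hR : M * (((S⁻¹).map (fun x => (x : ℂ))) -
      Complex.I • ((H⁻¹ * B * S⁻¹).map (fun x => (x : ℂ)))) = 1 := by
    have hfac : ((S⁻¹).map (fun x => (x : ℂ))) -
        Complex.I • ((H⁻¹ * B * S⁻¹).map (fun x => (x : ℂ))) =
        (1 - Complex.I • (H⁻¹ * B).map (fun x => (x : ℂ))) *
          (S⁻¹).map (fun x => (x : ℂ)) := by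
      rw [sub_mul, one_mul, Matrix.smul_mul, ← hmapmul]
    rw [hfac, ← mul_assoc, key, ← hmapmul, hSinv, hf]
    exact Matrix.map_one _ (map_zero f) (map_one f)
  have hinv : M⁻¹ = ((S⁻¹).map (fun x => (x : ℂ))) -
      Complex.I • ((H⁻¹ * B * S⁻¹).map (fun x => (x : ℂ))) :=
    Matrix.inv_eq_right_inv hR
  refine ⟨hSpd, hinv, ?_⟩
  intro i j
  rw [hinv]
  simp [Matrix.sub_apply, Matrix.smul_apply, Matrix.map_apply]
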